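/- Let K be a field and let A₀, A₁, B₀, B₁ be n×n matrices over K and d ∈ K satisfying (R3) B₀·A₀ + d·B₁·A₁ = I and (R4) B₀·A₁ + B₁·A₀ = 0. Suppose v is a nonzero row vector, w is a row vector, and m₀, m₀', m₁, m₁' ∈ K satisfy v·B₀ = m₀·w, w·A₀ = m₀'·v, v·B₁ = m₁·w, and w·A₁ = m₁'·v. Then m₀·m₀' + d·m₁·m₁' = 1 and m₀·m₁' + m₁·m₀' = 0 (the multiplier relations λ = m₀(x)m₀(1/x)·-type identities of the paper's eigenvector-sharing lemma). -/

import Mathlib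

open Matrix

private lemma vecMul_smul_mat {K : Type*} [Field K] {n : Type*} [Fintype n]
    (v : n → K) (d : K) (M : Matrix n n K) : v ᵥ* (d • M) = d • (v ᵥ* M) := by
  ext i
  simp [Matrix.vecMul, dotProduct, Finset.mul_sum, mul_left_comm]

/-- The multiplier relations of the paper's eigenvector-sharing lemma: under
(R3) `B₀·A₀ + d·B₁·A₁ = 1` and (R4) `B₀·A₁ + B₁·A₀ = 0`, if `v ≠ 0` and
`v·B₀ = m₀·w`, `w·A₀ = m₀'·v`, `v·B₁ = m₁·w`, `w·A₁ = m₁'·v`, then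
`m₀·m₀' + d·m₁·m₁' = 1` and `m₀·m₁' + m₁·m₀' = 0`. -/
theorem stmt_6 {K : Type*} [Field K] {n : Type*} [Fintype n] [DecidableEq n]
    (A₀ A₁ B₀ B₁ : Matrix n n K) (d : K)
    (hR3 : B₀ * A₀ + d • (B₁ * A₁) = 1)
    (hR4 : B₀ * A₁ + B₁ * A₀ = 0)
    (v w : n → K) (m₀ m₀' m₁ m₁' : K)
    (hv0 : v ≠ 0)
    (h1 : v ᵥ* B₀ = m₀ • w)
    (h2 : w ᵥ* A₀ = m₀' • v)
    (h3 : v ᵥ* B₁ = m₁ • w)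
    (h4 : w ᵥ* A₁ = m₁' • v) :
    m₀ * m₀' + d * m₁ * m₁' = 1 ∧ m₀ * m₁' + m₁ * m₀' = 0 := by
  have e3 : (m₀ * m₀' + d * m₁ * m₁') • v = v := by
    have := congrArg (v ᵥ* ·) hR3
    simp only [vecMul_add, smul_vecMul, ← vecMul_vecMul, h1, h2, h3, h4,
      vecMul_smul_mat, vecMul_one] at this
    rw [add_smul]
    simpa [smul_smul, mul_assoc, mul_comm, mul_left_comm] using this
  have e4 : (m₀ * m₁' + m₁ * m₀') • v = 0 := by
    have := congrArg (v ᵥ* ·) hR4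
    simp only [vecMul_add, ← vecMul_vecMul, h1, h2, h3, h4,
      smul_vecMul, vecMul_zero] at this
    rw [add_smul]
    simpa [smul_smul] using this
  constructor
  · by_contra h
    have : (m₀ * m₀' + d * m₁ * m₁' - 1) • v = 0 := by
      rw [sub_smul, e3, one_smul, sub_self]
    exact h (sub_eq_zero.mp ((smul_eq_zero.mp this).resolve_right hv0))
  · exact (smul_eq_zero.mp e4).resolve_right hv0
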